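/- For n, x ∈ ℤ and t ≥ 0, let F̂_n(x,t) = ((−1)^n/(2πi)) ∮_{|w|=r} dw w^{n−x−1} (1−w)^{−n} e^{t(w−1)}, where the contour is a positively oriented circle of radius r ∈ (0,1) centered at the origin, so that for n ≤ 0 it encloses the only pole of the integrand, at w = 0. Then for every n ≤ −1, x ∈ ℤ and t ≥ 0, the series ∑_{y < x} F̂_n(y,t) converges absolutely and F̂_{n+1}(x,t) = −∑_{y < x} F̂_n(y,t). -/

import Mathlib

open Complex Set

/-- `F̂ n x t r = ((-1)^n/(2πi)) ∮_{|w|=r} dw w^(n-x-1) (1-w)^(-n) e^(t(w-1))`,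
with the contour a positively oriented circle of radius `r ∈ (0,1)` centered at the
origin, so that for `n ≤ 0` it encloses the only pole of the integrand, at `w = 0`. -/
noncomputable def Fhat (n x : ℤ) (t : ℝ) (r : ℝ) : ℂ :=
  ((-1 : ℂ) ^ n / (2 * ↑Real.pi * Complex.I)) *
    ∮ w in C(0, r), w ^ (n - x - 1) * (1 - w) ^ (-n) * Complex.exp (↑t * (w - 1))

lemma key9 (n x : ℤ) (hn : n ≤ -1) (t : ℝ) (ht : 0 ≤ t) (r : ℝ)
    (hr : r ∈ Set.Ioo (0 : ℝ) 1) :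
    HasSum (fun k : ℕ => ∮ w in C(0, r),
        w ^ (n - (x - 1 - (k : ℤ)) - 1) * (1 - w) ^ (-n) * Complex.exp (↑t * (w - 1)))
      (∮ w in C(0, r),
        w ^ ((n + 1) - x - 1) * (1 - w) ^ (-(n + 1)) * Complex.exp (↑t * (w - 1))) := by
  obtain ⟨hr0, hr1⟩ := hr
  have hrne : r ≠ 0 := hr0.ne'
  set m : ℕ := (-n).toNat with hm
  have hmn : (-n : ℤ) = (m : ℤ) := (Int.toNat_of_nonneg (by omega)).symm
  have hcm : Continuous (circleMap 0 r) := continuous_circleMap 0 r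
  have hne : ∀ θ : ℝ, circleMap 0 r θ ≠ 0 := fun θ => circleMap_ne_center hrne
  have habs : ∀ θ : ℝ, ‖circleMap 0 r θ‖ = r := by
    intro θ; rw [norm_circleMap_zero, abs_of_pos hr0]
  have h1w : ∀ θ : ℝ, (1 : ℂ) - circleMap 0 r θ ≠ 0 := by
    intro θ h
    have h2 : ‖circleMap 0 r θ‖ = ‖(1 : ℂ)‖ := by
      congr 1; linear_combination -h
    rw [habs θ, norm_one] at h2
    exact absurd h2 hr1.ne
  have hbC : ∀ θ : ℝ, ‖((1 : ℂ) - circleMap 0 r θ) ^ (-n)‖ ≤ (1 + r) ^ m := by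
    intro θ
    rw [hmn, zpow_natCast, norm_pow]
    apply pow_le_pow_left₀ (norm_nonneg _)
    calc ‖(1 : ℂ) - circleMap 0 r θ‖ ≤ ‖(1 : ℂ)‖ + ‖circleMap 0 r θ‖ := norm_sub_le _ _
      _ = 1 + r := by rw [norm_one, habs]
  have hbE : ∀ θ : ℝ, ‖Complex.exp (↑t * (circleMap 0 r θ - 1))‖ ≤ 1 := by
    intro θ
    rw [Complex.norm_exp, Real.exp_le_one_iff]
    have h1 : (circleMap 0 r θ).re ≤ r := (Complex.re_le_norm _).trans (habs θ).le
    have h2 : ((t : ℂ) * (circleMap 0 r θ - 1)).re = t * ((circleMap 0 r θ).re - 1) := by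
      simp [Complex.mul_re]
    rw [h2]
    nlinarith
  simp only [circleIntegral]
  apply intervalIntegral.hasSum_integral_of_dominated_convergence
    (fun k θ => r * r ^ (n - x) * (1 + r) ^ m * r ^ k)
  · -- measurability
    intro k
    apply Continuous.aestronglyMeasurable
    simp only [deriv_circleMap]
    apply Continuous.smul (hcm.mul continuous_const)
    apply Continuous.mul
    apply Continuous.mul
    · exact Continuous.zpow₀ hcm _ (fun θ => Or.inl (hne θ))
    · rw [hmn]
      exact Continuous.zpow₀ (continuous_const.sub hcm) _ (fun θ => Or.inr (by positivity))
    · exact Complex.continuous_exp.comp (continuous_const.mul (hcm.sub continuous_const))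
  · -- bound
    intro k
    filter_upwards with θ hθ
    simp only [deriv_circleMap, norm_smul, norm_mul]
    have e1 : ‖circleMap 0 r θ‖ = r := by rw [habs]
    have e2 : ‖circleMap 0 r θ ^ (n - (x - 1 - (k : ℤ)) - 1)‖ = r ^ (n - x) * r ^ k := by
      rw [norm_zpow, e1, show n - (x - 1 - (k : ℤ)) - 1 = (n - x) + k by ring,
        zpow_add₀ hrne, zpow_natCast]
    rw [e1, e2, Complex.norm_I, mul_one]
    calc r * (r ^ (n - x) * r ^ k * ‖((1:ℂ) - circleMap 0 r θ) ^ (-n)‖ *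
          ‖Complex.exp (↑t * (circleMap 0 r θ - 1))‖)
        ≤ r * (r ^ (n - x) * r ^ k * ((1 + r) ^ m) * 1) := by
          gcongr
          · exact hbC θ
          · exact hbE θ
      _ = r * r ^ (n - x) * (1 + r) ^ m * r ^ k := by ring
  · filter_upwards with θ hθ
    exact (summable_geometric_of_lt_one hr0.le hr1).mul_left _
  · apply intervalIntegrable_const
  · -- pointwise HasSum
    filter_upwards with θ hθ
    set w := circleMap 0 r θ with hwdef
    set E := Complex.exp (↑t * (w - 1)) with hE
    have hw1 : ‖w‖ < 1 := by rw [habs]; exact hr1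
    have hterm : ∀ k : ℕ,
        w ^ (n - (x - 1 - (k : ℤ)) - 1) * (1 - w) ^ (-n) * E =
          w ^ k * (w ^ (n - x) * (1 - w) ^ (-n) * E) := by
      intro k
      rw [show n - (x - 1 - (k : ℤ)) - 1 = (k : ℤ) + (n - x) by ring,
        zpow_add₀ (hne θ), zpow_natCast]
      ring
    have hval : (1 - w)⁻¹ * (w ^ (n - x) * (1 - w) ^ (-n) * E) =
        w ^ ((n + 1) - x - 1) * (1 - w) ^ (-(n + 1)) * E := by
      rw [show (n + 1) - x - 1 = n - x by ring,
        show -(n + 1) = -n + (-1) by ring, zpow_add₀ (h1w θ), zpow_neg_one]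
      ring
    have h := (hasSum_geometric_of_norm_lt_one hw1).mul_right
      (w ^ (n - x) * (1 - w) ^ (-n) * E)
    rw [hval] at h
    have G : HasSum (fun k : ℕ =>
        w ^ (n - (x - 1 - (k : ℤ)) - 1) * (1 - w) ^ (-n) * E)
        (w ^ ((n + 1) - x - 1) * (1 - w) ^ (-(n + 1)) * E) := by
      simpa only [hterm] using h
    exact G.const_smul _

/-- An explicit enumeration of `Set.Iio x` by natural numbers. -/
def iioEquiv (x : ℤ) : ℕ ≃ ↥(Set.Iio x) where
  toFun := fun k => ⟨x - 1 - k, by simp only [Set.mem_Iio]; omega⟩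
  invFun := fun y => (x - 1 - (y : ℤ)).toNat
  left_inv := fun k => by dsimp only; omega
  right_inv := fun y => by
    have hy : (y : ℤ) < x := y.2
    ext
    simp only
    rw [Int.toNat_of_nonneg (by omega)]
    omega

/-- For every `n ≤ -1`, `x ∈ ℤ`, `t ≥ 0` and radius `r ∈ (0,1)`, the series
`∑_{y < x} F̂_n(y,t)` converges absolutely and `F̂_{n+1}(x,t) = -∑_{y < x} F̂_n(y,t)`. -/
theorem statement9 (n x : ℤ) (hn : n ≤ -1) (t : ℝ) (ht : 0 ≤ t) (r : ℝ)
    (hr : r ∈ Set.Ioo (0 : ℝ) 1) :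
    Summable (fun y : ↥(Set.Iio x) => Fhat n (↑y) t r) ∧
      Fhat (n + 1) x t r = -∑' y : ↥(Set.Iio x), Fhat n (↑y) t r := by
  set c : ℂ := (-1 : ℂ) ^ n / (2 * ↑Real.pi * Complex.I) with hc
  have key := (key9 n x hn t ht r hr).mul_left c
  have hs : HasSum (fun y : ↥(Set.Iio x) => Fhat n (↑y) t r)
      (c * ∮ w in C(0, r),
        w ^ ((n + 1) - x - 1) * (1 - w) ^ (-(n + 1)) * Complex.exp (↑t * (w - 1))) := by
    rw [← (iioEquiv x).hasSum_iff]
    simp only [Function.comp_def, iioEquiv, Equiv.coe_fn_mk]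
    exact key
  refine ⟨hs.summable, ?_⟩
  rw [hs.tsum_eq]
  have hpow : ((-1 : ℂ)) ^ (n + 1) = -((-1 : ℂ) ^ n) := by
    rw [zpow_add_one₀ (by norm_num : (-1 : ℂ) ≠ 0)]
    ring
  show ((-1 : ℂ) ^ (n + 1) / (2 * ↑Real.pi * Complex.I)) * _ = _
  rw [hpow, hc]
  ring
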